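/- Let B be a complex vector space and for each n ≥ 1 let Ser(B) be the space of sequences F = (F^[n])_{n≥1} where F^[n] : B^{n−1} → B is multilinear (F^[1] ∈ B). Define BM : Ser(B) → Ser(B) by (BM F)^[n] = Σ_{π ∈ Int(n)} F^[π], where F^[π] is the product of terms of F along the blocks of the interval partition π. Then BM is a bijection, with inverse given by F^[n] = Σ_{π ∈ Int(n)} (−1)^{|π|−1} G^[π] where G = BM F. -/

import Mathlib

/-! Recursive encoding of non-crossing partitions.

An `NCS` encodes a non-crossing partition of `{1,…,n}` (where `n = sz π`):
`empty` is the empty partition of the empty set, and `cons inner tail` is the partition whose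
block containing `1` has `inner.length + 1` elements, with the non-crossing partition
`inner[j]` nested in the gap after the `(j+1)`-st element of that block, and with `tail` the
partition of the points lying after the largest element of that block. -/
inductive NCS : Type
  | empty : NCS
  | cons (inner : List NCS) (tail : NCS) : NCS

namespace NCS

mutual
  /-- The number of points of the underlying set of the encoded partition. -/
  def sz : NCS → ℕ
    | .empty => 0
    | .cons inner tail => szL inner + 1 + sz tail
  /-- `szL inner = inner.length + Σ sz`. -/
  def szL : List NCS → ℕ
    | [] => 0
    | g :: gs => sz g + 1 + szL gs
end

mutual
  /-- The number of blocks of the encoded partition. -/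
  def nbl : NCS → ℕ
    | .empty => 0
    | .cons inner tail => 1 + nblL inner + nbl tail
  def nblL : List NCS → ℕ
    | [] => 0
    | g :: gs => nbl g + nblL gs
end

/-- Interval partitions: all the gaps are empty, recursively. -/
def isIntB : NCS → Bool
  | .empty => true
  | .cons inner tail => inner.all (fun g => match g with | .empty => true | _ => false) && isIntB tail

/-- `π ≪ 1ₙ`: the block containing `1` also contains `n`, i.e. the tail is empty. -/
def isOneB : NCS → Bool
  | .cons _ .empty => true
  | _ => false

end NCS
namespace NCS

mutual
  /-- The list of all encoded non-crossing partitions of `{1,…,n}`. -/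
  def allNC : ℕ → List NCS
    | 0 => [NCS.empty]
    | n + 1 =>
        (List.range (n + 1)).attach.flatMap fun j =>
          (allL j.1).flatMap fun inner =>
            (allNC (n - j.1)).map fun tail => NCS.cons inner tail
  termination_by n => n
  decreasing_by
    · have := j.2; simp [List.mem_range] at this; omega
    · have := j.2; simp [List.mem_range] at this; omega
  /-- All lists `gs` of encoded partitions with `szL gs = m`. -/
  def allL : ℕ → List (List NCS)
    | 0 => [[]]
    | m + 1 =>
        (List.range (m + 1)).attach.flatMap fun s =>
          (allNC s.1).flatMap fun g =>
            (allL (m - s.1)).map fun rest => g :: rest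
  termination_by m => m
  decreasing_by
    · have := s.2; simp [List.mem_range] at this; omega
    · have := s.2; simp [List.mem_range] at this; omega
end

end NCS

/-! Nested functionals and `B`-series. -/

section Series

variable {B : Type*} [Ring B] [Algebra ℂ B]

open NCS

mutual
  /-- Nested evaluation with boundary terms.  For an encoded partition `π` of `n` points and a
  list `cs = [c_0, c_1, …, c_n]`, `wEval F π cs` is the value of the parenthesized expression
  `c_0 W_1 c_1 W_2 c_2 ⋯ W_n c_n`, where the words `W_m` are the nesting words of `π` and
  `F k` is the term of the series with `k` arguments (i.e. the paper's `F^[k+1]`). -/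
  def wEval (F : ℕ → List B → B) : NCS → List B → B
    | .empty, cs => cs.headD 1
    | .cons inner tail, cs =>
        cs.headD 1 * F inner.length (wArgs F inner cs.tail) *
          wEval F tail (cs.tail.drop (NCS.szL inner))
  /-- The list of arguments fed to the term of the outer block: one argument per gap. -/
  def wArgs (F : ℕ → List B → B) : List NCS → List B → List B
    | [], _ => []
    | g :: gs, cs =>
        wEval F g (cs.take (NCS.sz g + 1)) :: wArgs F gs (cs.drop (NCS.sz g + 1))
end

/-- The nested functional `F^[π]` of a series, evaluated on a list of `sz π − 1` arguments. -/
def ncFun (F : ℕ → List B → B) (π : NCS) (bs : List B) : B :=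
  wEval F π ((1 : B) :: (bs ++ [1]))

/-- Two-coloured nested evaluation: the blocks of the outermost chain use the series `Fo`,
all blocks nested inside the gaps use the series `Fi`. -/
def wEvalO (Fo Fi : ℕ → List B → B) : NCS → List B → B
  | .empty, cs => cs.headD 1
  | .cons inner tail, cs =>
      cs.headD 1 * Fo inner.length (wArgs Fi inner cs.tail) *
        wEvalO Fo Fi tail (cs.tail.drop (NCS.szL inner))

/-- The coloured nested functional `(Fo, Fi)^[π, o_π]`: for `π ≪ 1ₙ` the unique outer block
carries a term of `Fo`, all other blocks carry terms of `Fi`. -/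
def ncFunO (Fo Fi : ℕ → List B → B) (π : NCS) (bs : List B) : B :=
  wEvalO Fo Fi π ((1 : B) :: (bs ++ [1]))

end Series

/-- A `B`-series: the term `F n` is a function of `n` arguments (the paper's `F^[n+1]`),
presented on lists of length exactly `n`. -/
def Ser (B : Type*) : Type _ :=
  (n : ℕ) → {l : List B // l.length = n} → B

instance (B : Type*) [One B] : Nonempty (Ser B) :=
  ⟨fun _ _ => 1⟩

/-- Application of a series to an arbitrary list (padded/truncated to the exact arity). -/
def Ser.app {B : Type*} [One B] (F : Ser B) (n : ℕ) (l : List B) : B :=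
  F n ⟨List.takeD n l 1, by simp⟩

section Transforms

variable {B : Type*} [Ring B] [Algebra ℂ B]

open NCS

/-- The series is multilinear: each term is (the restriction of) a `ℂ`-multilinear map. -/
def Ser.IsML (F : Ser B) : Prop :=
  ∀ n : ℕ, ∃ m : MultilinearMap ℂ (fun _ : Fin n => B) B,
    ∀ l : {l : List B // l.length = n}, F n l = m fun i => l.1.getD i.1 1

/-- The map `RM`: `(RM F)^[n] = Σ_{π ∈ NC(n)} F^[π]`. -/
def RMt (F : Ser B) : Ser B := fun n l =>
  ((allNC (n + 1)).map fun π => ncFun (F.app) π l.1).sum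

/-- The map `BM`: `(BM F)^[n] = Σ_{π ∈ Int(n)} F^[π]`. -/
def BMt (F : Ser B) : Ser B := fun n l =>
  (((allNC (n + 1)).filter fun π => isIntB π).map fun π => ncFun (F.app) π l.1).sum

/-- The map `RB`: `(RB F)^[n] = Σ_{π ∈ NC(n), π ≪ 1ₙ} F^[π]`. -/
def RBt (F : Ser B) : Ser B := fun n l =>
  (((allNC (n + 1)).filter fun π => isOneB π).map fun π => ncFun (F.app) π l.1).sum

/-- The map `RB_α`: `(RB_α F)^[n] = Σ_{π ≪ 1ₙ} (F, α∘F)^[π, o_π]`, the unique outer block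
carrying a term of `F` and all other blocks carrying terms of `α ∘ F`. -/
def RBa (α : B →ₗ[ℂ] B) (F : Ser B) : Ser B := fun n l =>
  (((allNC (n + 1)).filter fun π => isOneB π).map fun π =>
    ncFunO (F.app) (fun k bs => α (F.app k bs)) π l.1).sum

/-- Termwise composition `α ∘ F` of a linear map with a series. -/
def cS (α : B →ₗ[ℂ] B) (F : Ser B) : Ser B := fun n l => α (F n l)

/-- We identify `Σ_alg(B)` with `Ser B` via moment series, so an algebraic distribution *is*
its moment series.  The `R`-transform: the unique series with `RM (R_μ) = M_μ`. -/
noncomputable def Rtr (μ : Ser B) : Ser B := Function.invFun (RMt (B := B)) μ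

/-- The `B`-transform: the unique series with `BM (B_μ) = M_μ`. -/
noncomputable def Btr (μ : Ser B) : Ser B := Function.invFun (BMt (B := B)) μ

/-- The transformation `𝔹_α`, defined by `R_{𝔹_α(μ)} = RB_α (R_μ)`. -/
noncomputable def Bop (α : B →ₗ[ℂ] B) (μ : Ser B) : Ser B := RMt (RBa α (Rtr μ))

/-- The Boolean-to-free Bercovici–Pata bijection `𝔹`, defined by `R_{𝔹(μ)} = B_μ`. -/
noncomputable def BPbij (μ : Ser B) : Ser B := RMt (Btr μ)

/-- Free convolution power: `R_{μ^{⊞β}} = β ∘ R_μ`. -/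
noncomputable def freePow (β : B →ₗ[ℂ] B) (μ : Ser B) : Ser B := RMt (cS β (Rtr μ))

/-- Boolean convolution power: `B_{μ^{⊎β}} = β ∘ B_μ`. -/
noncomputable def boolPow (β : B →ₗ[ℂ] B) (μ : Ser B) : Ser B := BMt (cS β (Btr μ))

end Transforms


namespace BMaux

variable {α : Type*}

lemma headD_drop (l : List α) (n : ℕ) (d : α) : (l.drop n).headD d = l.getD n d := by
  simp [List.headD_eq_head?_getD, List.head?_drop, List.getD_eq_getElem?_getD]

lemma getD_zero (l : List α) (d : α) : l.getD 0 d = l.headD d := by cases l <;> simp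

lemma getD_tail (l : List α) (i : ℕ) (d : α) : l.tail.getD i d = l.getD (i+1) d := by
  cases l <;> simp

lemma takeD_eq_ofFn (n : ℕ) (l : List α) (d : α) :
    List.takeD n l d = List.ofFn (fun i : Fin n => l.getD i d) := by
  induction n generalizing l with
  | zero => simp
  | succ k ih =>
    rw [List.takeD_succ, List.ofFn_succ, ih l.tail]
    congr 1
    · rw [← List.headD_eq_head?_getD, ← getD_zero]; norm_num
    · refine congrArg _ (funext fun i => ?_)
      rw [getD_tail l i d]
      norm_num

lemma getD_ofFn {n : ℕ} (f : Fin n → α) (i : ℕ) (h : i < n) (d : α) :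
    (List.ofFn f).getD i d = f ⟨i, h⟩ := by
  rw [List.getD_eq_getElem _ _ (by simpa using h), List.getElem_ofFn]

lemma getD_takeD (k : ℕ) (l : List α) (d : α) (j : ℕ) (h : j < k) :
    (List.takeD k l d).getD j d = l.getD j d := by
  rw [takeD_eq_ofFn, getD_ofFn _ _ h]

lemma takeD_congr (k : ℕ) (l1 l2 : List α) (d : α)
    (h : ∀ j < k, l1.getD j d = l2.getD j d) :
    List.takeD k l1 d = List.takeD k l2 d := by
  rw [takeD_eq_ofFn, takeD_eq_ofFn]
  exact congrArg _ (funext fun i => h i i.2)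

lemma takeD_takeD (j k : ℕ) (l : List α) (d : α) (h : j ≤ k) :
    List.takeD j (List.takeD k l d) d = List.takeD j l d :=
  takeD_congr _ _ _ _ fun i hi => getD_takeD _ _ _ _ (lt_of_lt_of_le hi h)

lemma takeD_append_le (k : ℕ) (l l' : List α) (d : α) (h : k ≤ l.length) :
    List.takeD k (l ++ l') d = List.takeD k l d :=
  takeD_congr _ _ _ _ fun i hi => List.getD_append _ _ _ _ (lt_of_lt_of_le hi h)

lemma ofFn_getD (n : ℕ) (l : List α) (d : α) (h : l.length = n) :
    (List.ofFn fun i : Fin n => l.getD i d) = l := by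
  apply List.ext_getElem (by simp [h])
  intro j h1 h2
  rw [List.getElem_ofFn]
  exact List.getD_eq_getElem l d h2

lemma takeD_self (k : ℕ) (l : List α) (d : α) (h : l.length = k) :
    List.takeD k l d = l := by
  rw [takeD_eq_ofFn, ofFn_getD _ _ _ h]

lemma getD_drop' (l : List α) (a j : ℕ) (d : α) :
    (l.drop a).getD j d = l.getD (a+j) d := by
  simp [List.getD_eq_getElem?_getD, List.getElem?_drop]

lemma getD_set_self (l : List α) (i : ℕ) (x d : α) (h : i < l.length) :
    (l.set i x).getD i d = x := by
  simp [List.getD_eq_getElem?_getD, List.getElem?_set_self h]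

lemma getD_set_ne (l : List α) (i j : ℕ) (x d : α) (h : i ≠ j) :
    (l.set i x).getD j d = l.getD j d := by
  simp [List.getD_eq_getElem?_getD, List.getElem?_set_ne h]

lemma ofFn_update {n : ℕ} (v : Fin n → α) (i : Fin n) (x : α) :
    List.ofFn (Function.update v i x) = (List.ofFn v).set i.1 x := by
  apply List.ext_getElem (by simp)
  intro j h1 h2
  rw [List.getElem_ofFn, List.getElem_set]
  by_cases hj : j = i.1
  · rw [if_pos hj.symm]
    have : (⟨j, by simpa using h1⟩ : Fin n) = i := Fin.ext hj
    rw [this, Function.update_self]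
  · rw [if_neg (fun h => hj h.symm), List.getElem_ofFn]
    rw [Function.update_of_ne (by simp [Fin.ext_iff, hj])]

lemma sum_range_list {M : Type*} [AddCommMonoid M] (f : ℕ → M) (n : ℕ) :
    ((List.range n).map f).sum = ∑ i ∈ Finset.range n, f i := by
  induction n with
  | zero => simp
  | succ k ih => rw [List.sum_range_succ, Finset.sum_range_succ, ih]

lemma sum_map_flatMap {β γ : Type*} {M : Type*} [AddCommMonoid M] (l : List β)
    (g : β → List γ) (h : γ → M) :
    ((l.flatMap g).map h).sum = (l.map (fun a => ((g a).map h).sum)).sum := by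
  induction l with
  | nil => simp
  | cons a t ih => simp [List.flatMap_cons, ih]

lemma flatMap_if_filter {β γ : Type*} (l : List β) (p : β → Bool) (X : β → List γ) :
    (l.flatMap fun a => if p a then X a else []) = (l.filter p).flatMap X := by
  induction l with
  | nil => simp
  | cons a t ih => by_cases h : p a <;> simp [h, ih]

lemma flatMap_attach {β γ : Type*} (l : List β) (F : β → List γ) :
    l.attach.flatMap (fun x => F x.1) = l.flatMap F := by
  simp [List.flatMap, List.attach_map_val]

section CS

variable {B : Type*} [Ring B]

/-- Chain sums: `CS w p m = Σ over chains p = t₀ < t₁ < ⋯ < t_k = p + m of ∏ w tᵢ tᵢ₊₁`. -/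
def CS (w : ℕ → ℕ → B) : ℕ → ℕ → B
  | _, 0 => 1
  | p, (m+1) => ∑ d ∈ Finset.range (m+1), w p (p+d+1) * CS w (p+d+1) (m-d)
  termination_by p m => m
  decreasing_by omega

lemma CS_zero (w : ℕ → ℕ → B) (p : ℕ) : CS w p 0 = 1 := by rw [CS]

lemma CS_succ (w : ℕ → ℕ → B) (p m : ℕ) :
    CS w p (m+1) = ∑ d ∈ Finset.range (m+1), w p (p+d+1) * CS w (p+d+1) (m-d) := by
  rw [CS]

lemma CS_congr_shift (w1 w2 : ℕ → ℕ → B) (a : ℕ) : ∀ k q,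
    (∀ s t, q ≤ s → s < t → t ≤ q + k → w1 s t = w2 (a+s) (a+t)) →
    CS w1 q k = CS w2 (a+q) k := by
  intro k
  induction k using Nat.strong_induction_on with
  | _ k ih =>
    intro q h
    cases k with
    | zero => rw [CS_zero, CS_zero]
    | succ m =>
      rw [CS_succ, CS_succ]
      refine Finset.sum_congr rfl fun d hd => ?_
      have hd' : d < m+1 := Finset.mem_range.mp hd
      rw [h q (q+d+1) le_rfl (by omega) (by omega)]
      have h2 := ih (m-d) (by omega) (q+d+1)
        (fun s t hs hst ht => h s t (by omega) hst (by omega))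
      rw [h2, show a+(q+d+1) = a+q+d+1 from by omega]

lemma CS_congr (w1 w2 : ℕ → ℕ → B) (k q : ℕ)
    (h : ∀ s t, q ≤ s → s < t → t ≤ q + k → w1 s t = w2 s t) :
    CS w1 q k = CS w2 q k := by
  have := CS_congr_shift w1 w2 0 k q (by simpa using h)
  simpa using this

lemma sum_tri {M : Type*} [AddCommMonoid M] (m : ℕ) (A : ℕ → ℕ → M) :
    ∑ d ∈ Finset.range m, ∑ j ∈ Finset.range (m-d), A d j
      = ∑ t ∈ Finset.range m, ∑ d ∈ Finset.range (t+1), A d (t-d) := by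
  induction m with
  | zero => simp
  | succ k ih =>
    rw [Finset.sum_range_succ (fun t => ∑ d ∈ Finset.range (t+1), A d (t-d)), ← ih,
      Finset.sum_range_succ]
    have : ∀ d ∈ Finset.range k, ∑ j ∈ Finset.range (k+1-d), A d j
        = (∑ j ∈ Finset.range (k-d), A d j) + A d (k-d) := by
      intro d hd
      have hd' : d < k := Finset.mem_range.mp hd
      rw [show k+1-d = (k-d)+1 from by omega, Finset.sum_range_succ]
    rw [Finset.sum_congr rfl this, Finset.sum_add_distrib,
      Finset.sum_range_succ (fun d => A d (k-d))]
    simp [add_assoc]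

lemma CS_last (w : ℕ → ℕ → B) : ∀ m p,
    CS w p (m+1) = ∑ t ∈ Finset.range (m+1), CS w p t * w (p+t) (p+m+1) := by
  intro m
  induction m using Nat.strong_induction_on with
  | _ m ih =>
    intro p
    rw [CS_succ, Finset.sum_range_succ, Finset.sum_range_succ' (fun t => CS w p t * w (p+t) (p+m+1))]
    simp only [Nat.sub_self, CS_zero, mul_one, one_mul, Nat.add_zero]
    congr 1
    simp only [show ∀ k : ℕ, p+(k+1) = p+k+1 from fun k => by omega]
    have step : ∀ d ∈ Finset.range m, w p (p+d+1) * CS w (p+d+1) (m-d)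
        = ∑ t ∈ Finset.range (m-d), w p (p+d+1) * (CS w (p+d+1) t * w (p+d+1+t) (p+m+1)) := by
      intro d hd
      have hd' : d < m := Finset.mem_range.mp hd
      rw [show m-d = (m-d-1)+1 from by omega, ih (m-d-1) (by omega) (p+d+1)]
      rw [Finset.mul_sum]
      refine Finset.sum_congr rfl fun t ht => ?_
      rw [show p+d+1+(m-d-1)+1 = p+m+1 from by omega]
    rw [Finset.sum_congr rfl step, sum_tri]
    refine Finset.sum_congr rfl fun t ht => ?_
    have ht' : t < m := Finset.mem_range.mp ht
    rw [CS_succ, Finset.sum_mul]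
    refine Finset.sum_congr rfl fun d hd => ?_
    have hd' : d < t+1 := Finset.mem_range.mp hd
    rw [show p+d+1+(t-d) = p+t+1 from by omega, mul_assoc]

/-- The key inversion identity for chain sums. -/
lemma CS_inv (w : ℕ → ℕ → B) : ∀ m p,
    CS (fun s t => -CS w s (t-s)) p (m+1) = -w p (p+m+1) := by
  intro m
  induction m using Nat.strong_induction_on with
  | _ m ih =>
    intro p
    rw [CS_succ, Finset.sum_range_succ]
    have last : (fun s t => -CS w s (t-s)) p (p+m+1) * CS (fun s t => -CS w s (t-s)) (p+m+1) (m-m)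
        = -CS w p (m+1) := by
      simp only [Nat.sub_self, CS_zero, mul_one]
      rw [show p+m+1-p = m+1 from by omega]
    rw [last]
    have step : ∀ d ∈ Finset.range m,
        (fun s t => -CS w s (t-s)) p (p+d+1) * CS (fun s t => -CS w s (t-s)) (p+d+1) (m-d)
        = CS w p (d+1) * w (p+d+1) (p+m+1) := by
      intro d hd
      have hd' : d < m := Finset.mem_range.mp hd
      have h2 : CS (fun s t => -CS w s (t-s)) (p+d+1) (m-d) = -w (p+d+1) (p+m+1) := by
        rw [show m-d = (m-d-1)+1 from by omega, ih (m-d-1) (by omega) (p+d+1),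
          show p+d+1+(m-d-1)+1 = p+m+1 from by omega]
      rw [h2]
      simp only [show p+d+1-p = d+1 from by omega]
      rw [neg_mul_neg]
    rw [Finset.sum_congr rfl step]
    have : ∑ d ∈ Finset.range m, CS w p (d+1) * w (p+d+1) (p+m+1) = CS w p (m+1) - w p (p+m+1) := by
      rw [CS_last w m p, Finset.sum_range_succ' (fun t => CS w p t * w (p+t) (p+m+1))]
      simp only [CS_zero, one_mul, add_comm p 0, Nat.zero_add]
      have : ∀ d, p+(d+1) = p+d+1 := fun d => by omega
      simp only [this]
      abel
    rw [this]; abel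

end CS
open NCS

section Part2

variable {B : Type*} [Ring B] [Algebra ℂ B]

lemma comm_neg_one_pow (k : ℕ) (x y : B) :
    x * ((-1:B)^k * y) = (-1:B)^k * (x * y) := by
  rcases Nat.even_or_odd k with h | h
  · rw [h.neg_one_pow]; simp
  · rw [h.neg_one_pow]; simp [mul_assoc]

def isE : NCS → Bool := fun g => match g with | .empty => true | _ => false

lemma isIntB_cons (inner : List NCS) (tail : NCS) :
    isIntB (.cons inner tail)
      = (inner.all (fun g => match g with | .empty => true | _ => false) && isIntB tail) := rfl

lemma allNC_zero : allNC 0 = [NCS.empty] := by rw [allNC]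

lemma allNC_succ (n : ℕ) : allNC (n+1) =
    (List.range (n+1)).flatMap fun j =>
      (allL j).flatMap fun inner => (allNC (n-j)).map fun tail => NCS.cons inner tail := by
  rw [allNC]
  exact flatMap_attach (List.range (n+1))
    (fun j => (allL j).flatMap fun inner => (allNC (n-j)).map fun tail => NCS.cons inner tail)

lemma allL_zero : allL 0 = [[]] := by rw [allL]

lemma allL_succ (m : ℕ) : allL (m+1) =
    (List.range (m+1)).flatMap fun s =>
      (allNC s).flatMap fun g => (allL (m-s)).map fun rest => g :: rest := by
  rw [allL]
  exact flatMap_attach (List.range (m+1))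
    (fun s => (allNC s).flatMap fun g => (allL (m-s)).map fun rest => g :: rest)

lemma flatMap_range_zero {γ : Type*} (n : ℕ) (X : ℕ → List γ) (h : ∀ s, s ≠ 0 → X s = []) :
    (List.range (n+1)).flatMap X = X 0 := by
  induction n with
  | zero => simp [List.range_succ]
  | succ k ih =>
    rw [List.range_succ, List.flatMap_append, ih, List.flatMap_singleton, h (k+1) (by omega)]
    simp

lemma filter_allNC_isE (s : ℕ) : (allNC s).filter isE = if s = 0 then [NCS.empty] else [] := by
  cases s with
  | zero => rw [allNC_zero]; rfl
  | succ n =>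
    rw [allNC_succ, if_neg (by omega), List.filter_flatMap]
    have h1 : ∀ j ∈ List.range (n+1),
        (((allL j).flatMap fun inner => (allNC (n-j)).map fun tail => NCS.cons inner tail).filter
          isE) = ([] : List NCS) := by
      intro j _
      rw [List.filter_flatMap]
      have h2 : ∀ inner ∈ allL j,
          ((allNC (n-j)).map fun tail => NCS.cons inner tail).filter isE = ([] : List NCS) := by
        intro inner _
        rw [List.filter_map]
        have : (isE ∘ fun tail => NCS.cons inner tail) = fun _ => false := rfl
        rw [this, List.filter_false, List.map_nil]
      rw [List.flatMap_congr h2]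
      simp
    rw [List.flatMap_congr h1]
    simp

lemma filter_allL_isE : ∀ m : ℕ,
    (allL m).filter (·.all isE) = [List.replicate m NCS.empty] := by
  intro m
  induction m using Nat.strong_induction_on with
  | _ m ih =>
    cases m with
    | zero => rw [allL_zero]; rfl
    | succ k =>
      rw [allL_succ, List.filter_flatMap]
      have h1 : ∀ s ∈ List.range (k+1),
          (((allNC s).flatMap fun g => (allL (k-s)).map fun rest => g :: rest).filter
            (·.all isE))
          = if s = 0 then [List.replicate (k+1) NCS.empty] else [] := by
        intro s hs
        rw [List.filter_flatMap]
        have h2 : ∀ g ∈ allNC s,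
            (((allL (k-s)).map fun rest => g :: rest).filter (·.all isE))
            = if isE g then ((allL (k-s)).filter (·.all isE)).map (fun rest => g :: rest)
              else [] := by
          intro g _
          rw [List.filter_map]
          cases hg : isE g with
          | true =>
            rw [if_pos rfl]
            congr 1
            apply List.filter_congr
            intro rest _
            show (g :: rest).all isE = rest.all isE
            rw [List.all_cons, hg, Bool.true_and]
          | false =>
            rw [if_neg (by simp)]
            have : ∀ rest ∈ allL (k-s), ((·.all isE) ∘ fun rest => g :: rest) rest = false := by
              intro rest _
              show (g :: rest).all isE = false
              rw [List.all_cons, hg, Bool.false_and]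
            rw [List.filter_congr this, List.filter_false, List.map_nil]
        rw [List.flatMap_congr h2, flatMap_if_filter, filter_allNC_isE]
        cases s with
        | zero =>
          rw [if_pos rfl, if_pos rfl, List.flatMap_singleton,
            ih (k-0) (by omega), Nat.sub_zero]
          rfl
        | succ s' => rw [if_neg (by omega), if_neg (by omega)]; rfl
      rw [List.flatMap_congr h1, flatMap_range_zero _ _ (fun s hs => by rw [if_neg hs]),
        if_pos rfl]

lemma filter_allNC_int (m : ℕ) : (allNC (m+1)).filter isIntB =
    (List.range (m+1)).flatMap fun j =>
      ((allNC (m-j)).filter isIntB).map fun tail =>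
        NCS.cons (List.replicate j NCS.empty) tail := by
  rw [allNC_succ, List.filter_flatMap]
  have h1 : ∀ j ∈ List.range (m+1),
      (((allL j).flatMap fun inner => (allNC (m-j)).map fun tail => NCS.cons inner tail).filter
        isIntB)
      = ((allNC (m-j)).filter isIntB).map fun tail =>
          NCS.cons (List.replicate j NCS.empty) tail := by
    intro j _
    rw [List.filter_flatMap]
    have h2 : ∀ inner ∈ allL j,
        (((allNC (m-j)).map fun tail => NCS.cons inner tail).filter isIntB)
        = if inner.all isE
          then ((allNC (m-j)).filter isIntB).map (fun tail => NCS.cons inner tail)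
          else [] := by
      intro inner _
      rw [List.filter_map]
      cases hg : inner.all isE with
      | true =>
        rw [if_pos rfl]
        congr 1
        apply List.filter_congr
        intro tail _
        show isIntB (NCS.cons inner tail) = isIntB tail
        rw [isIntB_cons]
        show (inner.all isE && isIntB tail) = isIntB tail
        rw [hg, Bool.true_and]
      | false =>
        rw [if_neg (by simp)]
        have : ∀ tail ∈ allNC (m-j), (isIntB ∘ fun tail => NCS.cons inner tail) tail = false := by
          intro tail _
          show isIntB (NCS.cons inner tail) = false
          rw [isIntB_cons]
          show (inner.all isE && isIntB tail) = false
          rw [hg, Bool.false_and]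
        rw [List.filter_congr this, List.filter_false, List.map_nil]
    rw [List.flatMap_congr h2, flatMap_if_filter, filter_allL_isE, List.flatMap_singleton]
  exact List.flatMap_congr h1

end Part2
section Part3

variable {B : Type*} [Ring B] [Algebra ℂ B]

lemma comm_neg_one_pow' (k : ℕ) (x y : B) :
    x * ((-1:B)^k * y) = (-1:B)^k * (x * y) := comm_neg_one_pow k x y

lemma sz_empty : NCS.sz .empty = 0 := by rw [NCS.sz]

lemma szL_replicate (j : ℕ) : NCS.szL (List.replicate j NCS.empty) = j := by
  induction j with
  | zero => rw [List.replicate_zero, NCS.szL]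
  | succ k ih => rw [List.replicate_succ, NCS.szL, ih, sz_empty]; omega

lemma nbl_empty : NCS.nbl .empty = 0 := by rw [NCS.nbl]

lemma nblL_replicate (j : ℕ) : NCS.nblL (List.replicate j NCS.empty) = 0 := by
  induction j with
  | zero => rw [List.replicate_zero, NCS.nblL]
  | succ k ih => rw [List.replicate_succ, NCS.nblL, ih, nbl_empty]

lemma nbl_cons_replicate (j : ℕ) (tail : NCS) :
    NCS.nbl (.cons (List.replicate j NCS.empty) tail) = 1 + NCS.nbl tail := by
  rw [NCS.nbl, nblL_replicate]

lemma wEval_empty (f : ℕ → List B → B) (cs : List B) :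
    wEval f .empty cs = cs.headD 1 := by rw [wEval]

lemma wArgs_replicate (f : ℕ → List B → B) (j : ℕ) (cs : List B) :
    wArgs f (List.replicate j NCS.empty) cs = List.takeD j cs 1 := by
  induction j generalizing cs with
  | zero => rw [List.replicate_zero, wArgs, List.takeD_zero]
  | succ k ih =>
    rw [List.replicate_succ, wArgs, ih, sz_empty, List.drop_one, List.takeD_succ,
      wEval_empty, ← List.headD_eq_head?_getD]
    congr 1
    cases cs <;> rfl

lemma wEval_interval (f : ℕ → List B → B) (j : ℕ) (tail : NCS) (cs : List B) :
    wEval f (.cons (List.replicate j NCS.empty) tail) cs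
      = cs.headD 1 * f j (List.takeD j cs.tail 1) * wEval f tail (cs.tail.drop j) := by
  rw [wEval, wArgs_replicate, szL_replicate, List.length_replicate]

/-- The weight of a block spanning positions `s` to `t` of the boundary sequence `cs`. -/
def wt (f : ℕ → List B → B) (cs : List B) (s t : ℕ) : B :=
  (cs.drop s).headD 1 * f (t - s - 1) (List.takeD (t - s - 1) (cs.drop (s+1)) 1)

lemma wt_drop (f : ℕ → List B → B) (cs : List B) (a s t : ℕ) :
    wt f (cs.drop a) s t = wt f cs (a+s) (a+t) := by
  unfold wt
  rw [List.drop_drop, List.drop_drop, show a+t-(a+s)-1 = t-s-1 from by omega,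
    show a+(s+1) = a+s+1 from by omega, show a+s = a+s from rfl]

/-- Sum over interval partitions of `{1,…,m}` of `wEval`-type functionals. -/
def intSum (m : ℕ) (h : NCS → B) : B := (((allNC m).filter isIntB).map h).sum

lemma intSum_succ (m : ℕ) (h : NCS → B) :
    intSum (m+1) h = ∑ j ∈ Finset.range (m+1),
      intSum (m-j) (fun tail => h (.cons (List.replicate j .empty) tail)) := by
  unfold intSum
  rw [filter_allNC_int, sum_map_flatMap, ← sum_range_list]
  congr 1
  apply List.map_congr_left
  intro j _
  rw [List.map_map]
  rfl

lemma intSum_zero (h : NCS → B) : intSum 0 h = h .empty := by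
  unfold intSum
  rw [allNC_zero]
  have : List.filter isIntB [NCS.empty] = [NCS.empty] := rfl
  rw [this]
  simp

/-- `MS f m cs`: the sum of `wEval f π cs` over interval partitions of size `m`. -/
def MS (f : ℕ → List B → B) (m : ℕ) (cs : List B) : B :=
  intSum m (fun π => wEval f π cs)

/-- Signed sum with `(-1)^(nbl π)`. -/
def NS' (f : ℕ → List B → B) (m : ℕ) (cs : List B) : B :=
  intSum m (fun π => (-1:B)^(NCS.nbl π) * wEval f π cs)

lemma drop_tail (cs : List B) (j : ℕ) : cs.tail.drop j = cs.drop (j+1) := by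
  rw [← List.drop_one, List.drop_drop, Nat.add_comm]

lemma MS_eq (f : ℕ → List B → B) : ∀ (m : ℕ) (cs : List B),
    MS f m cs = CS (wt f cs) 0 m * (cs.drop m).headD 1 := by
  intro m
  induction m using Nat.strong_induction_on with
  | _ m ih =>
    intro cs
    cases m with
    | zero =>
      rw [MS, intSum_zero, wEval_empty, CS_zero, one_mul, List.drop_zero]
    | succ k =>
      rw [MS, intSum_succ]
      have step : ∀ j ∈ Finset.range (k+1),
          intSum (k-j) (fun tail => wEval f (.cons (List.replicate j .empty) tail) cs)
          = wt f cs 0 (0+j+1) * CS (wt f cs) (0+j+1) (k-j) * (cs.drop (k+1)).headD 1 := by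
        intro j hj
        have hj' : j < k+1 := Finset.mem_range.mp hj
        have e1 : intSum (k-j) (fun tail => wEval f (.cons (List.replicate j .empty) tail) cs)
            = cs.headD 1 * f j (List.takeD j cs.tail 1) * MS f (k-j) (cs.tail.drop j) := by
          rw [MS]
          unfold intSum
          rw [← List.sum_map_mul_left]
          congr 1
          apply List.map_congr_left
          intro tail _
          rw [wEval_interval]
        have e3 : CS (wt f (cs.drop (j+1))) 0 (k-j) = CS (wt f cs) (j+1) (k-j) := by
          have := CS_congr_shift (wt f (cs.drop (j+1))) (wt f cs) (j+1) (k-j) 0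
            (fun s t _ _ _ => wt_drop f cs (j+1) s t)
          simpa using this
        have e4 : (cs.drop (j+1)).drop (k-j) = cs.drop (k+1) := by
          rw [List.drop_drop, show j+1+(k-j) = k+1 from by omega]
        have e5 : wt f cs 0 (0+j+1) = cs.headD 1 * f j (List.takeD j cs.tail 1) := by
          unfold wt
          rw [List.drop_zero, show 0+j+1-0-1 = j from by omega, List.drop_one]
        rw [e1, drop_tail, ih (k-j) (by omega) (cs.drop (j+1)), e3, e4, e5,
          show (0:ℕ)+j+1 = j+1 from by omega, ← mul_assoc]
      rw [Finset.sum_congr rfl step, CS_succ, Finset.sum_mul]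

lemma NS'_eq (f : ℕ → List B → B) : ∀ (m : ℕ) (cs : List B),
    NS' f m cs = CS (fun s t => -(wt f cs s t)) 0 m * (cs.drop m).headD 1 := by
  intro m
  induction m using Nat.strong_induction_on with
  | _ m ih =>
    intro cs
    cases m with
    | zero =>
      rw [NS', intSum_zero, wEval_empty, CS_zero, one_mul, List.drop_zero, nbl_empty,
        pow_zero, one_mul]
    | succ k =>
      rw [NS', intSum_succ]
      have step : ∀ j ∈ Finset.range (k+1),
          intSum (k-j) (fun tail =>
            (-1:B)^(NCS.nbl (.cons (List.replicate j .empty) tail))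
              * wEval f (.cons (List.replicate j .empty) tail) cs)
          = (-(wt f cs 0 (0+j+1))) * CS (fun s t => -(wt f cs s t)) (0+j+1) (k-j)
              * (cs.drop (k+1)).headD 1 := by
        intro j hj
        have hj' : j < k+1 := Finset.mem_range.mp hj
        have e1 : intSum (k-j) (fun tail =>
            (-1:B)^(NCS.nbl (.cons (List.replicate j .empty) tail))
              * wEval f (.cons (List.replicate j .empty) tail) cs)
            = -(cs.headD 1 * f j (List.takeD j cs.tail 1)) * NS' f (k-j) (cs.tail.drop j) := by
          rw [NS']
          unfold intSum
          rw [← List.sum_map_mul_left]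
          congr 1
          apply List.map_congr_left
          intro tail _
          rw [wEval_interval, nbl_cons_replicate, pow_add, pow_one, mul_assoc, neg_one_mul,
            ← comm_neg_one_pow, neg_mul]
        have e3 : CS (fun s t => -(wt f (cs.drop (j+1)) s t)) 0 (k-j)
            = CS (fun s t => -(wt f cs s t)) (j+1) (k-j) := by
          have := CS_congr_shift (fun s t => -(wt f (cs.drop (j+1)) s t))
            (fun s t => -(wt f cs s t)) (j+1) (k-j) 0
            (fun s t _ _ _ => by
              show -(wt f (cs.drop (j+1)) s t) = -(wt f cs (j+1+s) (j+1+t))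
              rw [wt_drop f cs (j+1) s t])
          simpa using this
        have e4 : (cs.drop (j+1)).drop (k-j) = cs.drop (k+1) := by
          rw [List.drop_drop, show j+1+(k-j) = k+1 from by omega]
        have e5 : wt f cs 0 (0+j+1) = cs.headD 1 * f j (List.takeD j cs.tail 1) := by
          unfold wt
          rw [List.drop_zero, show 0+j+1-0-1 = j from by omega, List.drop_one]
        rw [e1, drop_tail, ih (k-j) (by omega) (cs.drop (j+1)), e3, e4, e5,
          show (0:ℕ)+j+1 = j+1 from by omega, ← mul_assoc]
      rw [Finset.sum_congr rfl step, CS_succ, Finset.sum_mul]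

/-- The signed sum appearing in the inversion formula. -/
def NSgn (f : ℕ → List B → B) (m : ℕ) (cs : List B) : B :=
  intSum m (fun π => (-1:B)^(NCS.nbl π - 1) * wEval f π cs)

lemma NSgn_eq (f : ℕ → List B → B) (m : ℕ) (cs : List B) :
    NSgn f (m+1) cs
      = -(CS (fun s t => -(wt f cs s t)) 0 (m+1)) * (cs.drop (m+1)).headD 1 := by
  rw [NSgn, intSum_succ]
  have step : ∀ j ∈ Finset.range (m+1),
      intSum (m-j) (fun tail =>
        (-1:B)^(NCS.nbl (.cons (List.replicate j .empty) tail) - 1)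
          * wEval f (.cons (List.replicate j .empty) tail) cs)
      = wt f cs 0 (0+j+1) * CS (fun s t => -(wt f cs s t)) (0+j+1) (m-j)
          * (cs.drop (m+1)).headD 1 := by
    intro j hj
    have hj' : j < m+1 := Finset.mem_range.mp hj
    have e1 : intSum (m-j) (fun tail =>
        (-1:B)^(NCS.nbl (.cons (List.replicate j .empty) tail) - 1)
          * wEval f (.cons (List.replicate j .empty) tail) cs)
        = cs.headD 1 * f j (List.takeD j cs.tail 1) * NS' f (m-j) (cs.tail.drop j) := by
      rw [NS']
      unfold intSum
      rw [← List.sum_map_mul_left]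
      congr 1
      apply List.map_congr_left
      intro tail _
      rw [wEval_interval, nbl_cons_replicate,
        show 1 + NCS.nbl tail - 1 = NCS.nbl tail from by omega, ← comm_neg_one_pow]
    have e3 : CS (fun s t => -(wt f (cs.drop (j+1)) s t)) 0 (m-j)
        = CS (fun s t => -(wt f cs s t)) (j+1) (m-j) := by
      have := CS_congr_shift (fun s t => -(wt f (cs.drop (j+1)) s t))
        (fun s t => -(wt f cs s t)) (j+1) (m-j) 0
        (fun s t _ _ _ => by
          show -(wt f (cs.drop (j+1)) s t) = -(wt f cs (j+1+s) (j+1+t))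
          rw [wt_drop f cs (j+1) s t])
      simpa using this
    have e4 : (cs.drop (j+1)).drop (m-j) = cs.drop (m+1) := by
      rw [List.drop_drop, show j+1+(m-j) = m+1 from by omega]
    have e5 : wt f cs 0 (0+j+1) = cs.headD 1 * f j (List.takeD j cs.tail 1) := by
      unfold wt
      rw [List.drop_zero, show 0+j+1-0-1 = j from by omega, List.drop_one]
    rw [e1, drop_tail, NS'_eq f (m-j) (cs.drop (j+1)), e3, e4, e5,
      show (0:ℕ)+j+1 = j+1 from by omega, ← mul_assoc]
  rw [Finset.sum_congr rfl step, CS_succ, neg_mul, Finset.sum_mul, ← Finset.sum_neg_distrib]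
  refine Finset.sum_congr rfl fun d _ => ?_
  rw [neg_mul, neg_mul, neg_neg]

end Part3
section Part4

variable {B : Type*} [Ring B] [Algebra ℂ B]

lemma window_getD (cs : List B) (p d u : ℕ) (h1 : 1 ≤ u) (h2 : u ≤ d) :
    ((1:B) :: (List.takeD d (cs.drop (p+1)) 1 ++ [1])).getD u 1 = cs.getD (p+u) 1 := by
  obtain ⟨u', rfl⟩ : ∃ u', u = u'+1 := ⟨u-1, by omega⟩
  rw [List.getD_cons_succ, List.getD_append _ _ _ _ (by simp; omega),
    getD_takeD _ _ _ _ (by omega), getD_drop', show p+1+u' = p+(u'+1) from by omega]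

lemma wt_window_head (f : ℕ → List B → B) (cs : List B) (p d t : ℕ)
    (h1 : 1 ≤ t) (h2 : t ≤ d+1) :
    (cs.drop p).headD 1 * wt f ((1:B) :: (List.takeD d (cs.drop (p+1)) 1 ++ [1])) 0 t
      = wt f cs p (p+t) := by
  unfold wt
  rw [List.drop_zero, List.headD_cons, one_mul, show (0:ℕ)+1 = 1 from rfl, List.drop_one,
    List.tail_cons, show t-0-1 = t-1 from by omega, show p+t-p-1 = t-1 from by omega,
    takeD_append_le _ _ _ _ (by simp; omega), takeD_takeD _ _ _ _ (by omega)]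

lemma wt_window_interior (f : ℕ → List B → B) (cs : List B) (p d s t : ℕ)
    (hs : 1 ≤ s) (hst : s < t) (ht : t ≤ d+1) :
    wt f ((1:B) :: (List.takeD d (cs.drop (p+1)) 1 ++ [1])) s t = wt f cs (p+s) (p+t) := by
  unfold wt
  have e1 : (((1:B) :: (List.takeD d (cs.drop (p+1)) 1 ++ [1])).drop s).headD 1
      = (cs.drop (p+s)).headD 1 := by
    rw [headD_drop, headD_drop, window_getD cs p d s hs (by omega)]
  have e2 : List.takeD (t-s-1) (((1:B) :: (List.takeD d (cs.drop (p+1)) 1 ++ [1])).drop (s+1)) 1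
      = List.takeD (p+t-(p+s)-1) (cs.drop (p+s+1)) 1 := by
    rw [show p+t-(p+s)-1 = t-s-1 from by omega]
    apply takeD_congr
    intro i hi
    rw [getD_drop', getD_drop', window_getD cs p d (s+1+i) (by omega) (by omega),
      show p+(s+1+i) = p+s+1+i from by omega]
  rw [e1, e2, show t-s-1 = p+t-(p+s)-1 from by omega]

lemma CS_window (f : ℕ → List B → B) (cs : List B) (p d m : ℕ) (h1 : 1 ≤ m) (h2 : m ≤ d+1) :
    (cs.drop p).headD 1
        * CS (wt f ((1:B) :: (List.takeD d (cs.drop (p+1)) 1 ++ [1]))) 0 m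
      = CS (wt f cs) p m := by
  obtain ⟨m', rfl⟩ : ∃ m', m = m'+1 := ⟨m-1, by omega⟩
  rw [CS_succ, CS_succ, Finset.mul_sum]
  refine Finset.sum_congr rfl fun e he => ?_
  have he' : e < m'+1 := Finset.mem_range.mp he
  have eCS : CS (wt f ((1:B) :: (List.takeD d (cs.drop (p+1)) 1 ++ [1]))) (0+e+1) (m'-e)
      = CS (wt f cs) (p+e+1) (m'-e) := by
    have := CS_congr_shift (wt f ((1:B) :: (List.takeD d (cs.drop (p+1)) 1 ++ [1])))
      (wt f cs) p (m'-e) (0+e+1)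
      (fun s t hs hst hts => wt_window_interior f cs p d s t (by omega) hst (by omega))
    rw [this, show p+(0+e+1) = p+e+1 from by omega]
  rw [← mul_assoc, eCS, wt_window_head f cs p d (0+e+1) (by omega) (by omega),
    show p+(0+e+1) = p+e+1 from by omega]

lemma CS_window_neg (f : ℕ → List B → B) (cs : List B) (p d m : ℕ)
    (h1 : 1 ≤ m) (h2 : m ≤ d+1) :
    (cs.drop p).headD 1
        * CS (fun s t => -(wt f ((1:B) :: (List.takeD d (cs.drop (p+1)) 1 ++ [1])) s t)) 0 m
      = CS (fun s t => -(wt f cs s t)) p m := by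
  obtain ⟨m', rfl⟩ : ∃ m', m = m'+1 := ⟨m-1, by omega⟩
  rw [CS_succ, CS_succ, Finset.mul_sum]
  refine Finset.sum_congr rfl fun e he => ?_
  have he' : e < m'+1 := Finset.mem_range.mp he
  have eCS : CS (fun s t => -(wt f ((1:B) :: (List.takeD d (cs.drop (p+1)) 1 ++ [1])) s t)) (0+e+1) (m'-e)
      = CS (fun s t => -(wt f cs s t)) (p+e+1) (m'-e) := by
    have := CS_congr_shift (fun s t => -(wt f ((1:B) :: (List.takeD d (cs.drop (p+1)) 1 ++ [1])) s t))
      (fun s t => -(wt f cs s t)) p (m'-e) (0+e+1)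
      (fun s t hs hst hts => by
        show -(wt f _ s t) = -(wt f cs (p+s) (p+t))
        rw [wt_window_interior f cs p d s t (by omega) hst (by omega)])
    rw [this, show p+(0+e+1) = p+e+1 from by omega]
  rw [← mul_assoc, eCS]
  congr 1
  show (cs.drop p).headD 1 * -(wt f _ 0 (0+e+1)) = -(wt f cs p (p+e+1))
  rw [mul_neg, wt_window_head f cs p d (0+e+1) (by omega) (by omega),
    show p+(0+e+1) = p+e+1 from by omega]

end Part4
section Part5

variable {B : Type*} [Ring B] [Algebra ℂ B]

lemma app_of_length (F : Ser B) (k : ℕ) (args : List B) (h : args.length = k) :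
    F.app k args = F k ⟨args, h⟩ := by
  have : (⟨List.takeD k args 1, by simp⟩ : {l : List B // l.length = k}) = ⟨args, h⟩ :=
    Subtype.ext (takeD_self _ _ _ h)
  exact congrArg (F k) this

lemma BMt_eq_MS (F : Ser B) (n : ℕ) (l : {l : List B // l.length = n}) :
    BMt F n l = MS (F.app) (n+1) ((1:B) :: (l.1 ++ [1])) := rfl

lemma boundary_headD (l : List B) (n : ℕ) (h : l.length = n) :
    ((((1:B) :: (l ++ [1])).drop (n+1)).headD 1) = 1 := by
  rw [List.drop_succ_cons, ← h, List.drop_left, List.headD_cons]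

/-- The weight of `BMt F` is the chain sum of the weights of `F`. -/
lemma wt_BMt (F : Ser B) (cs : List B) (s t : ℕ) (hst : s < t) :
    wt ((BMt F).app) cs s t = CS (wt (F.app) cs) s (t-s) := by
  have h1 : (List.takeD (t-s-1) (cs.drop (s+1)) 1).length = t-s-1 := by simp
  have e1 : wt ((BMt F).app) cs s t
      = (cs.drop s).headD 1 * CS (wt (F.app)
          ((1:B) :: (List.takeD (t-s-1) (cs.drop (s+1)) 1 ++ [1]))) 0 (t-s-1+1) := by
    show (cs.drop s).headD 1 * (BMt F).app (t-s-1) (List.takeD (t-s-1) (cs.drop (s+1)) 1) = _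
    rw [app_of_length (BMt F) _ _ h1, BMt_eq_MS, MS_eq, boundary_headD _ _ h1, mul_one]
  rw [e1, CS_window (F.app) cs s (t-s-1) (t-s-1+1) (by omega) le_rfl,
    show t-s-1+1 = t-s from by omega]

/-- The candidate inverse of `BM`. -/
def invSer (G : Ser B) : Ser B := fun n l => NSgn (G.app) (n+1) ((1:B) :: (l.1 ++ [1]))

lemma wt_invSer (G : Ser B) (cs : List B) (s t : ℕ) (hst : s < t) :
    wt ((invSer G).app) cs s t = -(CS (fun a b => -(wt (G.app) cs a b)) s (t-s)) := by
  have h1 : (List.takeD (t-s-1) (cs.drop (s+1)) 1).length = t-s-1 := by simp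
  have e1 : wt ((invSer G).app) cs s t
      = (cs.drop s).headD 1 * NSgn (G.app) (t-s-1+1)
          ((1:B) :: (List.takeD (t-s-1) (cs.drop (s+1)) 1 ++ [1])) := by
    show (cs.drop s).headD 1 * (invSer G).app (t-s-1) (List.takeD (t-s-1) (cs.drop (s+1)) 1) = _
    rw [app_of_length (invSer G) _ _ h1]
    rfl
  rw [e1, NSgn_eq, boundary_headD _ _ h1, mul_one, mul_neg,
    CS_window_neg (G.app) cs s (t-s-1) (t-s-1+1) (by omega) le_rfl,
    show t-s-1+1 = t-s from by omega]

lemma wt_boundary_eval (F : Ser B) (n : ℕ) (l : {l : List B // l.length = n}) :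
    wt (F.app) ((1:B) :: (l.1 ++ [1])) 0 (n+1) = F n l := by
  show ((((1:B) :: (l.1 ++ [1])).drop 0).headD 1)
      * F.app (n+1-0-1) (List.takeD (n+1-0-1) (((1:B) :: (l.1 ++ [1])).drop (0+1)) 1) = _
  rw [List.drop_zero, List.headD_cons, one_mul, show (0:ℕ)+1 = 1 from rfl, List.drop_one,
    List.tail_cons, show n+1-0-1 = n from by omega,
    takeD_append_le _ _ _ _ (by rw [l.2]), takeD_self n l.1 1 l.2,
    app_of_length F n l.1 l.2]

/-- The inversion formula: third bullet of the main theorem. -/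
lemma inv_formula (F : Ser B) (n : ℕ) (l : {l : List B // l.length = n}) :
    F n l = NSgn ((BMt F).app) (n+1) ((1:B) :: (l.1 ++ [1])) := by
  rw [NSgn_eq, boundary_headD l.1 n l.2, mul_one]
  have e1 : CS (fun s t => -(wt ((BMt F).app) ((1:B) :: (l.1 ++ [1])) s t)) 0 (n+1)
      = CS (fun s t => -(CS (wt (F.app) ((1:B) :: (l.1 ++ [1]))) s (t-s))) 0 (n+1) := by
    apply CS_congr
    intro s t _ hst _
    show -(wt ((BMt F).app) ((1:B) :: (l.1 ++ [1])) s t) = _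
    rw [wt_BMt F _ s t hst]
  have e2 := CS_inv (wt (F.app) ((1:B) :: (l.1 ++ [1]))) n 0
  simp only [Nat.zero_add] at e2
  rw [e1, e2, neg_neg, wt_boundary_eval]

/-- `BM ∘ invSer = id`: second main identity. -/
lemma BMt_invSer (G : Ser B) : BMt (invSer G) = G := by
  funext n l
  rw [BMt_eq_MS, MS_eq, boundary_headD l.1 n l.2, mul_one]
  have e1 : CS (wt ((invSer G).app) ((1:B) :: (l.1 ++ [1]))) 0 (n+1)
      = CS (fun s t => -(CS (fun a b => -(wt (G.app) ((1:B) :: (l.1 ++ [1])) a b)) s (t-s)))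
          0 (n+1) := by
    apply CS_congr
    intro s t _ hst _
    exact wt_invSer G _ s t hst
  have e2 := CS_inv (fun a b => -(wt (G.app) ((1:B) :: (l.1 ++ [1])) a b)) n 0
  simp only [Nat.zero_add, neg_neg] at e2
  rw [e1, e2, wt_boundary_eval]

end Part5
section Part6

variable {B : Type*} [Ring B] [Algebra ℂ B]

lemma getElem_takeD (k : ℕ) (l : List B) (d : B) (j : ℕ) (hj : j < (List.takeD k l d).length) :
    (List.takeD k l d)[j] = l.getD j d := by
  have h1 : j < k := by simpa using hj
  rw [← List.getD_eq_getElem (List.takeD k l d) d hj, getD_takeD _ _ _ _ h1]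

lemma getD_set_fun (args : List B) (k : ℕ) (h : args.length = k) (j : Fin k) (x : B) :
    (fun i : Fin k => (args.set j.1 x).getD i.1 1)
      = Function.update (fun i : Fin k => args.getD i.1 1) j x := by
  funext i
  by_cases hij : i = j
  · subst hij
    rw [Function.update_self, getD_set_self _ _ _ _ (by omega)]
  · rw [Function.update_of_ne hij, getD_set_ne _ _ _ _ _ (by
      intro hc
      exact hij (Fin.ext hc.symm))]

lemma app_getD (F : Ser B) (k : ℕ) (args : List B) (h : args.length = k)
    (mk : MultilinearMap ℂ (fun _ : Fin k => B) B)
    (hmk : ∀ l : {l : List B // l.length = k}, F k l = mk fun i => l.1.getD i.1 1) :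
    F.app k args = mk (fun i : Fin k => args.getD i.1 1) := by
  rw [app_of_length F k args h, hmk]

lemma app_set_add (F : Ser B) (hF : F.IsML) (k : ℕ) (args : List B) (h : args.length = k)
    (j : ℕ) (hj : j < k) (x y : B) :
    F.app k (args.set j (x+y)) = F.app k (args.set j x) + F.app k (args.set j y) := by
  obtain ⟨mk, hmk⟩ := hF k
  rw [app_getD F k _ (by simp [h]) mk hmk, app_getD F k _ (by simp [h]) mk hmk,
    app_getD F k _ (by simp [h]) mk hmk]
  have hj' : ∀ z : B, (fun i : Fin k => (args.set j z).getD i.1 1)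
      = Function.update (fun i : Fin k => args.getD i.1 1) ⟨j, hj⟩ z :=
    fun z => getD_set_fun args k h ⟨j, hj⟩ z
  rw [hj' (x+y), hj' x, hj' y]
  exact MultilinearMap.map_update_add mk _ ⟨j, hj⟩ x y

lemma app_set_smul (F : Ser B) (hF : F.IsML) (k : ℕ) (args : List B) (h : args.length = k)
    (j : ℕ) (hj : j < k) (c : ℂ) (x : B) :
    F.app k (args.set j (c • x)) = c • F.app k (args.set j x) := by
  obtain ⟨mk, hmk⟩ := hF k
  rw [app_getD F k _ (by simp [h]) mk hmk, app_getD F k _ (by simp [h]) mk hmk]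
  have hj' : ∀ z : B, (fun i : Fin k => (args.set j z).getD i.1 1)
      = Function.update (fun i : Fin k => args.getD i.1 1) ⟨j, hj⟩ z :=
    fun z => getD_set_fun args k h ⟨j, hj⟩ z
  rw [hj' (c • x), hj' x]
  exact MultilinearMap.map_update_smul mk _ ⟨j, hj⟩ c x

lemma wt_set_eq (f : ℕ → List B → B) (cs : List B) (i : ℕ) (x : B) (s t : ℕ)
    (hst : s < t) (h : i < s ∨ t ≤ i) :
    wt f (cs.set i x) s t = wt f cs s t := by
  unfold wt
  have e1 : ((cs.set i x).drop s).headD 1 = (cs.drop s).headD 1 := by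
    rw [headD_drop, headD_drop, getD_set_ne _ _ _ _ _ (by omega)]
  have e2 : List.takeD (t-s-1) ((cs.set i x).drop (s+1)) 1
      = List.takeD (t-s-1) (cs.drop (s+1)) 1 := by
    apply takeD_congr
    intro j hj
    rw [getD_drop', getD_drop', getD_set_ne _ _ _ _ _ (by omega)]
  rw [e1, e2]

lemma takeD_drop_set (cs : List B) (a k i : ℕ) (X : B) (ha : a ≤ i) (hik : i < a + k)
    (hlen : i < cs.length) :
    List.takeD k ((cs.set i X).drop a) 1 = (List.takeD k (cs.drop a) 1).set (i-a) X := by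
  apply List.ext_getElem (by simp)
  intro j hj1 hj2
  have hjk : j < k := by simpa using hj1
  rw [getElem_takeD _ _ _ _ hj1, List.getElem_set, getD_drop']
  by_cases hij : i - a = j
  · rw [if_pos hij, show a + j = i from by omega, getD_set_self _ _ _ _ hlen]
  · rw [if_neg hij, getD_set_ne _ _ _ _ _ (by omega), getElem_takeD _ _ _ _ (by simpa using hjk),
      getD_drop']

lemma wt_set_add (F : Ser B) (hF : F.IsML) (cs : List B) (i s t : ℕ) (x y : B)
    (hs : s ≤ i) (hit : i < t) (hlen : i < cs.length) :
    wt (F.app) (cs.set i (x+y)) s t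
      = wt (F.app) (cs.set i x) s t + wt (F.app) (cs.set i y) s t := by
  rcases Nat.eq_or_lt_of_le hs with hcase | hcase
  · -- i = s : the head factor is linear, the argument list is unchanged
    subst hcase
    unfold wt
    have e2 : ∀ z : B, List.takeD (t-s-1) ((cs.set s z).drop (s+1)) 1
        = List.takeD (t-s-1) (cs.drop (s+1)) 1 := by
      intro z
      apply takeD_congr
      intro j hj
      rw [getD_drop', getD_drop', getD_set_ne _ _ _ _ _ (by omega)]
    have e1 : ∀ z : B, ((cs.set s z).drop s).headD 1 = z := by
      intro z
      rw [headD_drop, getD_set_self _ _ _ _ hlen]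
    rw [e1, e1, e1, e2, e2, e2, add_mul]
  · -- s < i : the head factor is unchanged, the argument list is linear
    unfold wt
    have e1 : ∀ z : B, ((cs.set i z).drop s).headD 1 = (cs.drop s).headD 1 := by
      intro z
      rw [headD_drop, headD_drop, getD_set_ne _ _ _ _ _ (by omega)]
    have e2 : ∀ z : B, List.takeD (t-s-1) ((cs.set i z).drop (s+1)) 1
        = (List.takeD (t-s-1) (cs.drop (s+1)) 1).set (i-s-1) z := by
      intro z
      rw [takeD_drop_set cs (s+1) (t-s-1) i z (by omega) (by omega) hlen,
        show i-(s+1) = i-s-1 from by omega]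
    rw [e1, e1, e1, e2, e2, e2,
      app_set_add F hF (t-s-1) _ (by simp) (i-s-1) (by omega) x y, mul_add]

lemma wt_set_smul (F : Ser B) (hF : F.IsML) (cs : List B) (i s t : ℕ) (c : ℂ) (x : B)
    (hs : s ≤ i) (hit : i < t) (hlen : i < cs.length) :
    wt (F.app) (cs.set i (c • x)) s t = c • wt (F.app) (cs.set i x) s t := by
  rcases Nat.eq_or_lt_of_le hs with hcase | hcase
  · subst hcase
    unfold wt
    have e2 : ∀ z : B, List.takeD (t-s-1) ((cs.set s z).drop (s+1)) 1
        = List.takeD (t-s-1) (cs.drop (s+1)) 1 := by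
      intro z
      apply takeD_congr
      intro j hj
      rw [getD_drop', getD_drop', getD_set_ne _ _ _ _ _ (by omega)]
    have e1 : ∀ z : B, ((cs.set s z).drop s).headD 1 = z := by
      intro z
      rw [headD_drop, getD_set_self _ _ _ _ hlen]
    rw [e1, e1, e2, e2, smul_mul_assoc]
  · unfold wt
    have e1 : ∀ z : B, ((cs.set i z).drop s).headD 1 = (cs.drop s).headD 1 := by
      intro z
      rw [headD_drop, headD_drop, getD_set_ne _ _ _ _ _ (by omega)]
    have e2 : ∀ z : B, List.takeD (t-s-1) ((cs.set i z).drop (s+1)) 1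
        = (List.takeD (t-s-1) (cs.drop (s+1)) 1).set (i-s-1) z := by
      intro z
      rw [takeD_drop_set cs (s+1) (t-s-1) i z (by omega) (by omega) hlen,
        show i-(s+1) = i-s-1 from by omega]
    rw [e1, e1, e2, e2,
      app_set_smul F hF (t-s-1) _ (by simp) (i-s-1) (by omega) c x, mul_smul_comm]

lemma CS_wt_set_eq (f : ℕ → List B → B) (cs : List B) (i : ℕ) (x : B) (q k : ℕ) (hq : i < q) :
    CS (wt f (cs.set i x)) q k = CS (wt f cs) q k :=
  CS_congr _ _ k q (fun s t hs hst _ => wt_set_eq f cs i x s t hst (Or.inl (by omega)))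

lemma CS_wt_set_add (F : Ser B) (hF : F.IsML) (cs : List B) (x y : B) : ∀ k q i,
    q ≤ i → i < q + k → i < cs.length →
    CS (wt F.app (cs.set i (x+y))) q k
      = CS (wt F.app (cs.set i x)) q k + CS (wt F.app (cs.set i y)) q k := by
  intro k
  induction k using Nat.strong_induction_on with
  | _ k ih =>
    intro q i hqi hik hlen
    cases k with
    | zero => omega
    | succ k' =>
      rw [CS_succ, CS_succ, CS_succ, ← Finset.sum_add_distrib]
      refine Finset.sum_congr rfl fun d hd => ?_
      have hd' : d < k'+1 := Finset.mem_range.mp hd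
      by_cases hcase : i ≤ q + d
      · rw [CS_wt_set_eq F.app cs i _ (q+d+1) (k'-d) (by omega),
          CS_wt_set_eq F.app cs i _ (q+d+1) (k'-d) (by omega),
          CS_wt_set_eq F.app cs i _ (q+d+1) (k'-d) (by omega),
          wt_set_add F hF cs i q (q+d+1) x y hqi (by omega) hlen, add_mul]
      · rw [wt_set_eq F.app cs i _ q (q+d+1) (by omega) (Or.inr (by omega)),
          wt_set_eq F.app cs i _ q (q+d+1) (by omega) (Or.inr (by omega)),
          wt_set_eq F.app cs i _ q (q+d+1) (by omega) (Or.inr (by omega)),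
          ih (k'-d) (by omega) (q+d+1) i (by omega) (by omega) hlen, mul_add]

lemma CS_wt_set_smul (F : Ser B) (hF : F.IsML) (cs : List B) (c : ℂ) (x : B) : ∀ k q i,
    q ≤ i → i < q + k → i < cs.length →
    CS (wt F.app (cs.set i (c • x))) q k = c • CS (wt F.app (cs.set i x)) q k := by
  intro k
  induction k using Nat.strong_induction_on with
  | _ k ih =>
    intro q i hqi hik hlen
    cases k with
    | zero => omega
    | succ k' =>
      rw [CS_succ, CS_succ, Finset.smul_sum]
      refine Finset.sum_congr rfl fun d hd => ?_
      have hd' : d < k'+1 := Finset.mem_range.mp hd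
      by_cases hcase : i ≤ q + d
      · rw [CS_wt_set_eq F.app cs i _ (q+d+1) (k'-d) (by omega),
          CS_wt_set_eq F.app cs i _ (q+d+1) (k'-d) (by omega),
          wt_set_smul F hF cs i q (q+d+1) c x hqi (by omega) hlen, smul_mul_assoc]
      · rw [wt_set_eq F.app cs i _ q (q+d+1) (by omega) (Or.inr (by omega)),
          wt_set_eq F.app cs i _ q (q+d+1) (by omega) (Or.inr (by omega)),
          ih (k'-d) (by omega) (q+d+1) i (by omega) (by omega) hlen, mul_smul_comm]

lemma boundary_set (l : List B) (i : ℕ) (x : B) (hi : i < l.length) :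
    (1:B) :: (l.set i x ++ [1]) = ((1:B) :: (l ++ [1])).set (i+1) x := by
  rw [List.set_cons_succ, List.set_append, if_pos hi]

lemma BMt_set_add (F : Ser B) (hF : F.IsML) (n : ℕ) (L : List B) (hL : L.length = n)
    (i : ℕ) (hi : i < n) (x y : B) :
    BMt F n ⟨L.set i (x+y), by simp [hL]⟩
      = BMt F n ⟨L.set i x, by simp [hL]⟩ + BMt F n ⟨L.set i y, by simp [hL]⟩ := by
  rw [BMt_eq_MS, BMt_eq_MS, BMt_eq_MS, MS_eq, MS_eq, MS_eq]
  have htr : ∀ z : B, ((((1:B) :: (L.set i z ++ [1])).drop (n+1)).headD 1) = 1 :=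
    fun z => boundary_headD (L.set i z) n (by simp [hL])
  rw [htr, htr, htr, mul_one, mul_one, mul_one]
  have hb : ∀ z : B, ((1:B) :: (L.set i z ++ [1])) = ((1:B) :: (L ++ [1])).set (i+1) z :=
    fun z => boundary_set L i z (by omega)
  rw [hb, hb, hb]
  exact CS_wt_set_add F hF ((1:B) :: (L ++ [1])) x y (n+1) 0 (i+1) (by omega) (by omega)
    (by simp [hL]; omega)

lemma BMt_set_smul (F : Ser B) (hF : F.IsML) (n : ℕ) (L : List B) (hL : L.length = n)
    (i : ℕ) (hi : i < n) (c : ℂ) (x : B) :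
    BMt F n ⟨L.set i (c • x), by simp [hL]⟩ = c • BMt F n ⟨L.set i x, by simp [hL]⟩ := by
  rw [BMt_eq_MS, BMt_eq_MS, MS_eq, MS_eq]
  have htr : ∀ z : B, ((((1:B) :: (L.set i z ++ [1])).drop (n+1)).headD 1) = 1 :=
    fun z => boundary_headD (L.set i z) n (by simp [hL])
  rw [htr, htr, mul_one, mul_one]
  have hb : ∀ z : B, ((1:B) :: (L.set i z ++ [1])) = ((1:B) :: (L ++ [1])).set (i+1) z :=
    fun z => boundary_set L i z (by omega)
  rw [hb, hb]
  exact CS_wt_set_smul F hF ((1:B) :: (L ++ [1])) c x (n+1) 0 (i+1) (by omega) (by omega)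
    (by simp [hL]; omega)

lemma BMt_isML (F : Ser B) (hF : F.IsML) : (BMt F).IsML := by
  intro n
  refine ⟨{
      toFun := fun v => BMt F n ⟨List.ofFn v, by simp⟩
      map_update_add' := fun {dec} v i x y => by
        cases Subsingleton.elim dec (instDecidableEqFin n)
        have h1 : ∀ (z : B) (p : (List.ofFn (Function.update v i z)).length = n),
            (⟨List.ofFn (Function.update v i z), p⟩ : {l : List B // l.length = n})
              = ⟨(List.ofFn v).set i.1 z, by simp⟩ :=
          fun z p => Subtype.ext (ofFn_update v i z)
        beta_reduce
        rw [h1 (x+y), h1 x, h1 y]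
        exact BMt_set_add F hF n (List.ofFn v) (by simp) i.1 i.2 x y
      map_update_smul' := fun {dec} v i c x => by
        cases Subsingleton.elim dec (instDecidableEqFin n)
        have h1 : ∀ (z : B) (p : (List.ofFn (Function.update v i z)).length = n),
            (⟨List.ofFn (Function.update v i z), p⟩ : {l : List B // l.length = n})
              = ⟨(List.ofFn v).set i.1 z, by simp⟩ :=
          fun z p => Subtype.ext (ofFn_update v i z)
        beta_reduce
        rw [h1 (c • x), h1 x]
        exact BMt_set_smul F hF n (List.ofFn v) (by simp) i.1 i.2 c x }, ?_⟩
  intro l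
  show BMt F n l = BMt F n ⟨List.ofFn (fun i : Fin n => l.1.getD i.1 1), by simp⟩
  congr 1
  exact Subtype.ext (ofFn_getD n l.1 1 l.2).symm

end Part6
end BMaux
/-- `BM` preserves multilinearity, is a bijection of `Ser B`, and its inverse is given by
`F^[n] = Σ_{π ∈ Int(n)} (−1)^{|π|−1} (BM F)^[π]`. -/
theorem BM_bijective_with_inverse (B : Type*) [Ring B] [Algebra ℂ B] :
    (∀ F : Ser B, F.IsML → (BMt F).IsML) ∧
    Function.Bijective (BMt (B := B)) ∧
    (∀ (F : Ser B) (n : ℕ) (l : {l : List B // l.length = n}),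
      F n l =
        (((NCS.allNC (n + 1)).filter fun π => NCS.isIntB π).map fun π =>
          ((-1 : B) ^ (NCS.nbl π - 1)) * ncFun ((BMt F).app) π l.1).sum) := by
  refine ⟨fun F hF => BMaux.BMt_isML F hF, ⟨?_, ?_⟩, ?_⟩
  · intro F1 F2 h
    funext n l
    have e1 := BMaux.inv_formula F1 n l
    have e2 := BMaux.inv_formula F2 n l
    rw [e1, h, ← e2]
  · intro G
    exact ⟨BMaux.invSer G, BMaux.BMt_invSer G⟩
  · intro F n l
    exact BMaux.inv_formula F n l
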